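/- Let G = (V, E) be a multigraph with minimum cut value c ≥ 1, let α ≥ 1 be a real number, and let F ⊆ E be a set of edges such that the graph (V, E∖F) has exactly k connected components. Then the number of distinct α-minimum cuts of G whose edge sets are entirely contained in F is less than k^{2α}. -/

import Mathlib

open scoped Classical

/-- A multigraph on vertex type `V` is given by an edge-index type `E` together with a map
`ends : E → Sym2 V` assigning to each edge its (unordered) pair of endpoints; the hypothesis
`∀ e, ¬ (ends e).IsDiag` says that the two endpoints of every edge are distinct.
`survGraph ends F` is the simple graph on `V` whose adjacencies are given by the edges of the
multigraph that survive when the edges in `F` fail. -/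
def survGraph {V E : Type} (ends : E → Sym2 V) (F : Finset E) : SimpleGraph V :=
  SimpleGraph.fromRel (fun x y => ∃ e, e ∉ F ∧ ends e = s(x, y))

/-- The number of connected components of the graph surviving after the edges in `F` fail. -/
noncomputable def numComponents {V E : Type} (ends : E → Sym2 V) (F : Finset E) : ℕ :=
  Nat.card (survGraph ends F).ConnectedComponent

/-- Edge `e` crosses the 2-way cut determined by the vertex set `A` (one endpoint in `A`,
one endpoint outside `A`). -/
def crosses {V E : Type} (ends : E → Sym2 V) (A : Finset V) (e : E) : Prop :=
  (∃ x ∈ ends e, x ∈ A) ∧ (∃ x ∈ ends e, x ∉ A)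

/-- The edge set of the 2-way cut determined by the vertex set `A`. -/
noncomputable def cutEdges {V E : Type} [Fintype E] (ends : E → Sym2 V) (A : Finset V) :
    Finset E :=
  Finset.univ.filter (crosses ends A)

/-- The value of the 2-way cut determined by the vertex set `A`. -/
noncomputable def cutValue {V E : Type} [Fintype E] (ends : E → Sym2 V) (A : Finset V) : ℕ :=
  (cutEdges ends A).card

/-- When each edge fails independently with probability `p`, this is the probability that the
(random) set of failed edges is a member of `S`. -/
noncomputable def failurePr {E : Type} [Fintype E] (p : ℝ) (S : Finset (Finset E)) : ℝ :=
  ∑ F ∈ S, p ^ F.card * (1 - p) ^ (Fintype.card E - F.card)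

section Analytic
open Real Finset

/-- Gamma shift: `Γ(z+m) ≤ b^m Γ(z)` if `z + m - 1 ≤ b` and `1 ≤ z`. -/
lemma gamma_shift (m : ℕ) : ∀ z b : ℝ, 1 ≤ z → z + m - 1 ≤ b → Real.Gamma (z + m) ≤ b ^ m * Real.Gamma z := by
  induction m with
  | zero => intro z b hz hb; simp
  | succ m ih =>
    intro z b hz hb
    have hb' : z + m ≤ b := by push_cast at hb ⊢; linarith
    have hzm : (0:ℝ) < z + m := by positivity
    have h1 : Real.Gamma (z + ((m:ℝ)+1)) = (z + m) * Real.Gamma (z + m) := by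
      rw [show z + ((m:ℝ)+1) = (z + (m:ℝ)) + 1 by ring, Real.Gamma_add_one (ne_of_gt hzm)]
    push_cast
    rw [h1]
    have hib : z + (m:ℝ) - 1 ≤ b := by linarith
    have := ih z b hz hib
    have hbpos : (0:ℝ) ≤ b := le_trans (by linarith) hb'
    calc (z + m) * Real.Gamma (z + m) ≤ b * (b ^ m * Real.Gamma z) := by
          apply mul_le_mul hb' this (le_of_lt (Real.Gamma_pos_of_pos (by positivity))) hbpos
      _ = b ^ (m+1) * Real.Gamma z := by ring

/-- Interpolation via log-convexity: `Γ(x) ≤ (x-s)^s Γ(x-s)` for `0 < s ≤ 1`, `1 ≤ x - s`. -/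
lemma gamma_interp (x s : ℝ) (hs0 : 0 < s) (hs1 : s ≤ 1) (hx : 1 ≤ x - s) :
    Real.Gamma x ≤ (x - s) ^ s * Real.Gamma (x - s) := by
  set y := x - s with hy
  have hy0 : (0:ℝ) < y := by linarith
  have hy1 : (0:ℝ) < y + 1 := by linarith
  have hmem1 : y ∈ Set.Ioi (0:ℝ) := hy0
  have hmem2 : y + 1 ∈ Set.Ioi (0:ℝ) := hy1
  have hcomb : (1 - s) • y + s • (y + 1) = x := by simp [smul_eq_mul]; ring
  have := Real.convexOn_log_Gamma.2 hmem1 hmem2 (by linarith : (0:ℝ) ≤ 1 - s) (le_of_lt hs0) (by ring)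
  rw [hcomb] at this
  simp only [Function.comp_apply, smul_eq_mul] at this
  have hG1 : Real.log (Real.Gamma (y+1)) = Real.log y + Real.log (Real.Gamma y) := by
    rw [Real.Gamma_add_one (ne_of_gt hy0), Real.log_mul (ne_of_gt hy0)
      (ne_of_gt (Real.Gamma_pos_of_pos hy0))]
  have key : Real.log (Real.Gamma x) ≤ s * Real.log y + Real.log (Real.Gamma y) := by
    rw [hG1] at this; linarith
  have hGx : (0:ℝ) < Real.Gamma x := Real.Gamma_pos_of_pos (by linarith)
  have hrhs : (0:ℝ) < y ^ s * Real.Gamma y :=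
    mul_pos (Real.rpow_pos_of_pos hy0 s) (Real.Gamma_pos_of_pos hy0)
  rw [← Real.exp_log hGx, ← Real.exp_log hrhs]
  apply Real.exp_le_exp.2
  rw [Real.log_mul (ne_of_gt (Real.rpow_pos_of_pos hy0 s)) (ne_of_gt (Real.Gamma_pos_of_pos hy0)),
    Real.log_rpow hy0]
  exact key

/-- `Γ(x) ≤ 1` for `1 ≤ x ≤ 2`. -/
lemma gamma_le_one {x : ℝ} (h1 : 1 ≤ x) (h2 : x ≤ 2) : Real.Gamma x ≤ 1 := by
  have hcomb : (2 - x) • (1:ℝ) + (x - 1) • (2:ℝ) = x := by simp [smul_eq_mul]; ring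
  have := Real.convexOn_log_Gamma.2 (by norm_num : (1:ℝ) ∈ Set.Ioi 0)
    (by norm_num : (2:ℝ) ∈ Set.Ioi 0) (by linarith : (0:ℝ) ≤ 2 - x)
    (by linarith : (0:ℝ) ≤ x - 1) (by ring)
  rw [hcomb] at this
  simp only [Function.comp_apply, smul_eq_mul, Real.Gamma_one, Real.Gamma_two, Real.log_one,
    mul_zero, add_zero, zero_add] at this
  have hGx : (0:ℝ) < Real.Gamma x := Real.Gamma_pos_of_pos (by linarith)
  calc Real.Gamma x = Real.exp (Real.log (Real.Gamma x)) := (Real.exp_log hGx).symm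
    _ ≤ Real.exp 0 := Real.exp_le_exp.2 this
    _ = 1 := Real.exp_zero

lemma prod_nat_eq (r : ℕ) : ∀ k : ℕ, r ≤ k →
    (∏ i ∈ Finset.Icc (r+1) k, (i:ℝ)) = (k.factorial : ℝ) / (r.factorial : ℝ) := by
  intro k hk
  induction k, hk using Nat.le_induction with
  | base =>
    simp [div_self (Nat.cast_ne_zero.2 (Nat.factorial_ne_zero r) : (r.factorial:ℝ) ≠ 0)]
  | succ k hk ih =>
    rw [Finset.prod_Icc_succ_top (by omega), ih]
    have : (r.factorial : ℝ) ≠ 0 := Nat.cast_ne_zero.2 (Nat.factorial_ne_zero r)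
    rw [Nat.factorial_succ]
    push_cast
    field_simp

lemma prod_shift_eq (r : ℕ) (t : ℝ) (ht : t ≤ r) : ∀ k : ℕ, r ≤ k →
    (∏ i ∈ Finset.Icc (r+1) k, ((i:ℝ) - t)) = Real.Gamma ((k:ℝ) + 1 - t) / Real.Gamma ((r:ℝ) + 1 - t) := by
  intro k hk
  induction k, hk using Nat.le_induction with
  | base => simp [div_self (ne_of_gt (Real.Gamma_pos_of_pos (by linarith : (0:ℝ) < (r:ℝ)+1-t)))]
  | succ k hk ih =>
    have hkr : (r:ℝ) ≤ (k:ℝ) := Nat.cast_le.2 hk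
    have hpos : (0:ℝ) < (k:ℝ) + 1 - t := by linarith
    rw [Finset.prod_Icc_succ_top (by omega), ih]
    have hG : Real.Gamma ((k:ℝ) + 1 + 1 - t) = ((k:ℝ) + 1 - t) * Real.Gamma ((k:ℝ) + 1 - t) := by
      rw [show (k:ℝ) + 1 + 1 - t = ((k:ℝ) + 1 - t) + 1 by ring, Real.Gamma_add_one (ne_of_gt hpos)]
    push_cast
    rw [hG]
    ring

/-- The key analytic bound: `2^(r-1) * ∏_{i=r+1}^{k} i/(i-t) ≤ k^t` for `r = ⌈t⌉₊`, `2 ≤ t ≤ r ≤ k`. -/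
lemma analytic_bound (t : ℝ) (ht : 2 ≤ t) (k : ℕ) (hk : (⌈t⌉₊ : ℕ) ≤ k) :
    (2:ℝ) ^ (⌈t⌉₊ - 1) * ∏ i ∈ Finset.Icc (⌈t⌉₊+1) k, ((i:ℝ) / ((i:ℝ) - t)) ≤ (k:ℝ) ^ t := by
  set r := ⌈t⌉₊ with hr
  have ht0 : (0:ℝ) ≤ t := by linarith
  have htr : t ≤ (r:ℝ) := Nat.le_ceil t
  have hrt : (r:ℝ) < t + 1 := Nat.ceil_lt_add_one ht0
  have hr2 : 2 ≤ r := by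
    have : (2:ℝ) ≤ (r:ℝ) := le_trans ht htr
    exact_mod_cast this
  have hk2 : 2 ≤ k := le_trans hr2 hk
  have hkR : (0:ℝ) < (k:ℝ) := by positivity
  -- split the product
  have hprod : (∏ i ∈ Finset.Icc (r+1) k, ((i:ℝ) / ((i:ℝ) - t)))
      = (∏ i ∈ Finset.Icc (r+1) k, (i:ℝ)) / (∏ i ∈ Finset.Icc (r+1) k, ((i:ℝ) - t)) := by
    rw [← Finset.prod_div_distrib]
  have hposfac : ∀ i ∈ Finset.Icc (r+1) k, (0:ℝ) < (i:ℝ) - t := by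
    intro i hi
    have : r + 1 ≤ i := (Finset.mem_Icc.1 hi).1
    have : (r:ℝ) + 1 ≤ (i:ℝ) := by exact_mod_cast this
    linarith
  have hprodpos : (0:ℝ) < ∏ i ∈ Finset.Icc (r+1) k, ((i:ℝ) - t) :=
    Finset.prod_pos hposfac
  rw [hprod, prod_nat_eq r k hk, prod_shift_eq r t htr k hk]
  have hG2pos : (0:ℝ) < Real.Gamma ((r:ℝ) + 1 - t) := Real.Gamma_pos_of_pos (by linarith)
  have hkrR : (r:ℝ) ≤ (k:ℝ) := Nat.cast_le.2 hk
  have hGkpos : (0:ℝ) < Real.Gamma ((k:ℝ) + 1 - t) := Real.Gamma_pos_of_pos (by linarith)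
  -- goal: 2^(r-1) * ((k!/r!) / (Γ(k+1-t)/Γ(r+1-t))) ≤ k^t
  have hrw : (2:ℝ)^(r-1) * ((k.factorial:ℝ)/(r.factorial:ℝ) / (Real.Gamma ((k:ℝ)+1-t)/Real.Gamma ((r:ℝ)+1-t)))
      = (2:ℝ)^(r-1) * ((k.factorial:ℝ)/(r.factorial:ℝ)) * Real.Gamma ((r:ℝ)+1-t) / Real.Gamma ((k:ℝ)+1-t) := by
    field_simp
  rw [hrw, div_le_iff₀ hGkpos]
  -- now: 2^(r-1) * (k!/r!) * Γ(r+1-t) ≤ k^t * Γ(k+1-t)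
  have hGr1 : Real.Gamma ((r:ℝ) + 1 - t) ≤ 1 := gamma_le_one (by linarith) (by linarith)
  have h2r : (2:ℝ) ^ (r-1) ≤ (r.factorial : ℝ) := by
    have key : ∀ n : ℕ, 2 ^ (n-1) ≤ n.factorial := by
      intro n
      induction n with
      | zero => simp
      | succ n ih =>
        rcases Nat.lt_or_ge n 1 with h | h
        · interval_cases n <;> simp [Nat.factorial]
        · calc 2 ^ (n+1-1) = 2 * 2^(n-1) := by rw [show n+1-1 = (n-1)+1 by omega]; ring
            _ ≤ (n+1) * n.factorial := Nat.mul_le_mul (by omega) ih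
            _ = (n+1).factorial := rfl
    exact_mod_cast key r
  -- key: k! ≤ k^t * Γ(k+1-t)
  set s : ℝ := t - ((r:ℝ) - 1) with hs
  have hs0 : 0 < s := by simp [hs]; linarith
  have hs1 : s ≤ 1 := by simp [hs]; linarith
  have hz : (1:ℝ) ≤ (k:ℝ) - (r:ℝ) + 2 := by
    have : (r:ℝ) ≤ (k:ℝ) := Nat.cast_le.2 hk
    linarith
  have step1 : Real.Gamma ((k:ℝ)+1) ≤ (k:ℝ)^(r-1) * Real.Gamma ((k:ℝ) - (r:ℝ) + 2) := by
    have := gamma_shift (r-1) ((k:ℝ) - (r:ℝ) + 2) (k:ℝ) hz (by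
      have : ((r-1 : ℕ):ℝ) = (r:ℝ) - 1 := by
        have : 1 ≤ r := by omega
        push_cast [this]; ring
      rw [this]; linarith)
    have hcast : ((r-1 : ℕ):ℝ) = (r:ℝ) - 1 := by
      have : 1 ≤ r := by omega
      push_cast [this]; ring
    rw [hcast] at this
    calc Real.Gamma ((k:ℝ)+1) = Real.Gamma (((k:ℝ) - (r:ℝ) + 2) + ((r:ℝ)-1)) := by ring_nf
      _ ≤ (k:ℝ)^(r-1) * Real.Gamma ((k:ℝ) - (r:ℝ) + 2) := this
  have step2 : Real.Gamma ((k:ℝ) - (r:ℝ) + 2) ≤ (k:ℝ)^s * Real.Gamma ((k:ℝ) + 1 - t) := by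
    have hx : (1:ℝ) ≤ ((k:ℝ) - (r:ℝ) + 2) - s := by
      have : (r:ℝ) ≤ (k:ℝ) := Nat.cast_le.2 hk
      simp only [hs]; linarith
    have := gamma_interp ((k:ℝ) - (r:ℝ) + 2) s hs0 hs1 hx
    have heq : (k:ℝ) - (r:ℝ) + 2 - s = (k:ℝ) + 1 - t := by simp [hs]; ring
    rw [heq] at this
    calc Real.Gamma ((k:ℝ) - (r:ℝ) + 2) ≤ ((k:ℝ)+1-t - 0) ^ s * Real.Gamma ((k:ℝ)+1-t) := by
          simpa [heq] using this
      _ ≤ (k:ℝ)^s * Real.Gamma ((k:ℝ)+1-t) := by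
          apply mul_le_mul_of_nonneg_right _ (le_of_lt hGkpos)
          apply Real.rpow_le_rpow (by linarith) (by linarith) (le_of_lt hs0)
  have hfac : (k.factorial : ℝ) = Real.Gamma ((k:ℝ)+1) := (Real.Gamma_nat_eq_factorial k).symm
  have hrfacpos : (0:ℝ) < (r.factorial : ℝ) := by positivity
  have hcombine : (2:ℝ)^(r-1) * ((k.factorial:ℝ) / (r.factorial:ℝ)) * Real.Gamma ((r:ℝ)+1-t)
      ≤ (k:ℝ)^t * Real.Gamma ((k:ℝ)+1-t) := by
    have h1 : (2:ℝ)^(r-1) * ((k.factorial:ℝ) / (r.factorial:ℝ)) * Real.Gamma ((r:ℝ)+1-t)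
        ≤ (k.factorial:ℝ) := by
      have hle1 : (2:ℝ)^(r-1) / (r.factorial:ℝ) ≤ 1 := by
        rw [div_le_one hrfacpos]; exact h2r
      have : (2:ℝ)^(r-1) * ((k.factorial:ℝ) / (r.factorial:ℝ)) * Real.Gamma ((r:ℝ)+1-t)
          = (k.factorial:ℝ) * ((2:ℝ)^(r-1) / (r.factorial:ℝ)) * Real.Gamma ((r:ℝ)+1-t) := by ring
      rw [this]
      calc (k.factorial:ℝ) * ((2:ℝ)^(r-1) / (r.factorial:ℝ)) * Real.Gamma ((r:ℝ)+1-t)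
          ≤ (k.factorial:ℝ) * 1 * 1 := by
            apply mul_le_mul _ hGr1 (le_of_lt hG2pos) (by positivity)
            apply mul_le_mul_of_nonneg_left hle1 (by positivity)
        _ = (k.factorial:ℝ) := by ring
    calc (2:ℝ)^(r-1) * ((k.factorial:ℝ) / (r.factorial:ℝ)) * Real.Gamma ((r:ℝ)+1-t)
        ≤ (k.factorial:ℝ) := h1
      _ = Real.Gamma ((k:ℝ)+1) := hfac
      _ ≤ (k:ℝ)^(r-1) * ((k:ℝ)^s * Real.Gamma ((k:ℝ)+1-t)) := by
          calc Real.Gamma ((k:ℝ)+1) ≤ (k:ℝ)^(r-1) * Real.Gamma ((k:ℝ) - (r:ℝ) + 2) := step1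
            _ ≤ (k:ℝ)^(r-1) * ((k:ℝ)^s * Real.Gamma ((k:ℝ)+1-t)) := by
                apply mul_le_mul_of_nonneg_left step2 (by positivity)
      _ = (k:ℝ)^t * Real.Gamma ((k:ℝ)+1-t) := by
          rw [← mul_assoc]
          congr 1
          rw [← Real.rpow_natCast (k:ℝ) (r-1), ← Real.rpow_add hkR]
          congr 1
          have : ((r-1 : ℕ):ℝ) = (r:ℝ) - 1 := by
            have : 1 ≤ r := by omega
            push_cast [this]; ring
          rw [this]; simp only [hs]; ring
  exact hcombine

end Analytic

section Comb

variable {V E : Type} [Fintype V] [DecidableEq V] [Fintype E]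

lemma sym2_rep (z : Sym2 V) : ∃ x y : V, z = s(x, y) :=
  Sym2.ind (fun x y => ⟨x, y, rfl⟩) z

lemma mem_iff_of_notF (ends : E → Sym2 V) {F : Finset E} {A : Finset V}
    (hA : cutEdges ends A ⊆ F) {e : E} (he : e ∉ F) {x y : V}
    (hxy : ends e = s(x, y)) : x ∈ A ↔ y ∈ A := by
  have hnc : ¬ crosses ends A e := fun hcr =>
    he (hA (Finset.mem_filter.2 ⟨Finset.mem_univ e, hcr⟩))
  constructor
  · intro hx
    by_contra hy
    exact hnc ⟨⟨x, by rw [hxy]; exact Sym2.mem_mk_left x y, hx⟩,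
      ⟨y, by rw [hxy]; exact Sym2.mem_mk_right x y, hy⟩⟩
  · intro hy
    by_contra hx
    exact hnc ⟨⟨y, by rw [hxy]; exact Sym2.mem_mk_right x y, hy⟩,
      ⟨x, by rw [hxy]; exact Sym2.mem_mk_left x y, hx⟩⟩

lemma mem_iff_of_adj (ends : E → Sym2 V) {F : Finset E} {A : Finset V}
    (hA : cutEdges ends A ⊆ F) {x y : V}
    (h : (survGraph ends F).Adj x y) : x ∈ A ↔ y ∈ A := by
  rw [survGraph, SimpleGraph.fromRel_adj] at h
  rcases h with ⟨-, ⟨e, he, hxy⟩ | ⟨e, he, hxy⟩⟩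
  · exact mem_iff_of_notF ends hA he hxy
  · exact (mem_iff_of_notF ends hA he hxy).symm

lemma mem_iff_of_reachable (ends : E → Sym2 V) {F : Finset E} {A : Finset V}
    (hA : cutEdges ends A ⊆ F) {x y : V}
    (h : (survGraph ends F).Reachable x y) : x ∈ A ↔ y ∈ A := by
  obtain ⟨w⟩ := h
  induction w with
  | nil => rfl
  | cons hadj _ ih => exact (mem_iff_of_adj ends hA hadj).trans ih

lemma crosses_compl (ends : E → Sym2 V) (A : Finset V) (e : E) :
    crosses ends Aᶜ e ↔ crosses ends A e := by
  unfold crosses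
  simp only [Finset.mem_compl, not_not]
  tauto

lemma cutEdges_compl (ends : E → Sym2 V) (A : Finset V) :
    cutEdges ends Aᶜ = cutEdges ends A := by
  unfold cutEdges
  ext e
  simp [crosses_compl]

/-- If the endpoints of `e` lie in different components of `survGraph ends F`, then removing
`e` from `F` strictly decreases the number of components. -/
lemma numComponents_erase_lt (ends : E → Sym2 V) (F : Finset E) (e : E)
    (hsep : ∃ a ∈ ends e, ∃ b ∈ ends e, ¬ (survGraph ends F).Reachable a b) :
    numComponents ends (F.erase e) < numComponents ends F := by
  obtain ⟨x, y, hxy⟩ := sym2_rep (ends e)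
  obtain ⟨a, ha, b, hb, hab⟩ := hsep
  rw [hxy, Sym2.mem_iff] at ha hb
  have hxyr : ¬ (survGraph ends F).Reachable x y := by
    rcases ha with rfl | rfl <;> rcases hb with rfl | rfl
    · exact absurd (SimpleGraph.Reachable.refl _) hab
    · exact hab
    · exact fun h => hab h.symm
    · exact absurd (SimpleGraph.Reachable.refl _) hab
  have hne : x ≠ y := fun h => hxyr (h ▸ SimpleGraph.Reachable.refl x)
  have hle : survGraph ends F ≤ survGraph ends (F.erase e) := by
    intro u v huv
    rw [survGraph, SimpleGraph.fromRel_adj] at huv ⊢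
    refine ⟨huv.1, ?_⟩
    rcases huv.2 with ⟨e', he', hee⟩ | ⟨e', he', hee⟩
    · exact Or.inl ⟨e', fun h => he' (Finset.mem_of_mem_erase h), hee⟩
    · exact Or.inr ⟨e', fun h => he' (Finset.mem_of_mem_erase h), hee⟩
  have hadj' : (survGraph ends (F.erase e)).Adj x y := by
    rw [survGraph, SimpleGraph.fromRel_adj]
    exact ⟨hne, Or.inl ⟨e, Finset.notMem_erase e F, hxy⟩⟩
  set G := survGraph ends F
  set G' := survGraph ends (F.erase e)
  let ψ : G.ConnectedComponent → G'.ConnectedComponent :=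
    SimpleGraph.ConnectedComponent.map (SimpleGraph.Hom.ofLE hle)
  have hψmk : ∀ v : V, ψ (G.connectedComponentMk v) = G'.connectedComponentMk v := by
    intro v
    simp [ψ, SimpleGraph.ConnectedComponent.map_mk, SimpleGraph.Hom.ofLE_apply]
  have hsurj : Function.Surjective ψ := by
    intro K
    obtain ⟨v, hv⟩ := K.exists_rep
    exact ⟨G.connectedComponentMk v, by rw [hψmk]; exact hv⟩
  have hninj : ¬ Function.Injective ψ := by
    intro hinj
    have : ψ (G.connectedComponentMk x) = ψ (G.connectedComponentMk y) := by
      rw [hψmk, hψmk]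
      exact SimpleGraph.ConnectedComponent.sound hadj'.reachable
    exact hxyr (SimpleGraph.ConnectedComponent.eq.1 (hinj this))
  letI : Fintype G.ConnectedComponent := Fintype.ofFinite _
  letI : Fintype G'.ConnectedComponent := Fintype.ofFinite _
  have h1 : numComponents ends F = Fintype.card G.ConnectedComponent := Nat.card_eq_fintype_card
  have h2 : numComponents ends (F.erase e) = Fintype.card G'.ConnectedComponent :=
    Nat.card_eq_fintype_card
  rw [h1, h2]
  exact Fintype.card_lt_of_surjective_not_injective ψ hsurj hninj

end Comb

section Main

variable {V E : Type} [Fintype V] [DecidableEq V] [Fintype E]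

noncomputable def cutsIn (ends : E → Sym2 V) (c : ℕ) (α : ℝ) (F : Finset E) :
    Finset (Finset V) :=
  Finset.univ.filter (fun A : Finset V =>
    A.Nonempty ∧ Aᶜ.Nonempty ∧ (cutValue ends A : ℝ) ≤ α * c ∧ cutEdges ends A ⊆ F)

lemma mem_cutsIn {ends : E → Sym2 V} {c : ℕ} {α : ℝ} {F : Finset E} {A : Finset V} :
    A ∈ cutsIn ends c α F ↔
      A.Nonempty ∧ Aᶜ.Nonempty ∧ (cutValue ends A : ℝ) ≤ α * c ∧ cutEdges ends A ⊆ F := by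
  simp [cutsIn]

/-- Base case: cuts contained in `F` are unions of components, so there are at most
`2^(numComponents) - 2` of them. -/
lemma card_cutsIn_add_two_le (ends : E → Sym2 V) (c : ℕ) (α : ℝ) (F : Finset E)
    (hS : (cutsIn ends c α F).Nonempty) :
    (cutsIn ends c α F).card + 2 ≤ 2 ^ (numComponents ends F) := by
  obtain ⟨A₀, hA₀⟩ := hS
  obtain ⟨v₀, -⟩ := (mem_cutsIn.1 hA₀).1
  haveI : Nonempty V := ⟨v₀⟩
  set G := survGraph ends F with hG
  haveI : Nonempty G.ConnectedComponent := ⟨G.connectedComponentMk v₀⟩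
  letI : Fintype G.ConnectedComponent := Fintype.ofFinite _
  have hk : numComponents ends F = Fintype.card G.ConnectedComponent := Nat.card_eq_fintype_card
  set φ : Finset V → Finset G.ConnectedComponent :=
    fun A => A.image G.connectedComponentMk with hφ
  set T : Finset (Finset G.ConnectedComponent) :=
    (((Finset.univ : Finset G.ConnectedComponent).powerset).erase Finset.univ).erase ∅ with hT
  have hTcard : T.card = 2 ^ (Fintype.card G.ConnectedComponent) - 2 := by
    rw [hT, Finset.card_erase_of_mem, Finset.card_erase_of_mem, Finset.card_powerset,
      Finset.card_univ]
    · omega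
    · exact Finset.mem_powerset.2 (Finset.subset_univ _)
    · refine Finset.mem_erase.2 ⟨?_, Finset.mem_powerset.2 (Finset.empty_subset _)⟩
      exact fun h => (Finset.univ_nonempty (α := G.ConnectedComponent)).ne_empty h.symm
  have hmaps : ∀ A ∈ cutsIn ends c α F, φ A ∈ T := by
    intro A hA
    obtain ⟨hA1, hA2, -, hA4⟩ := mem_cutsIn.1 hA
    refine Finset.mem_erase.2 ⟨?_, Finset.mem_erase.2 ⟨?_, Finset.mem_powerset.2 (Finset.subset_univ _)⟩⟩
    · intro h
      obtain ⟨a, ha⟩ := hA1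
      have hmem : G.connectedComponentMk a ∈ φ A := Finset.mem_image_of_mem _ ha
      rw [h] at hmem
      exact Finset.notMem_empty _ hmem
    · intro h
      obtain ⟨b, hb⟩ := hA2
      have : G.connectedComponentMk b ∈ φ A := h ▸ Finset.mem_univ _
      obtain ⟨a, haA, hab⟩ := Finset.mem_image.1 this
      have : b ∈ A :=
        (mem_iff_of_reachable ends hA4 (SimpleGraph.ConnectedComponent.eq.1 hab)).1 haA
      exact Finset.mem_compl.1 hb this
  have hinj : Set.InjOn φ (cutsIn ends c α F) := by
    intro A hA B hB hAB
    have hA4 := (mem_cutsIn.1 hA).2.2.2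
    have hB4 := (mem_cutsIn.1 hB).2.2.2
    ext x
    constructor
    · intro hx
      have : G.connectedComponentMk x ∈ φ B := hAB ▸ Finset.mem_image_of_mem _ hx
      obtain ⟨b, hbB, hbx⟩ := Finset.mem_image.1 this
      exact (mem_iff_of_reachable ends hB4 (SimpleGraph.ConnectedComponent.eq.1 hbx)).1 hbB
    · intro hx
      have : G.connectedComponentMk x ∈ φ A := hAB ▸ Finset.mem_image_of_mem _ hx
      obtain ⟨a, haA, hax⟩ := Finset.mem_image.1 this
      exact (mem_iff_of_reachable ends hA4 (SimpleGraph.ConnectedComponent.eq.1 hax)).1 haA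
  have hcard := Finset.card_le_card_of_injOn φ hmaps hinj
  rw [hTcard] at hcard
  have h2 : 2 ≤ 2 ^ (Fintype.card G.ConnectedComponent) := by
    have : 1 ≤ Fintype.card G.ConnectedComponent := Fintype.card_pos (α := G.ConnectedComponent)
    calc 2 = 2^1 := rfl
      _ ≤ 2 ^ (Fintype.card G.ConnectedComponent) := Nat.pow_le_pow_right (by norm_num) this
  rw [hk]
  omega

end Main

set_option maxHeartbeats 1000000

section MainInduction

variable {V E : Type} [Fintype V] [DecidableEq V] [Fintype E]

noncomputable def degOf (ends : E → Sym2 V) (c : ℕ) (α : ℝ) (F : Finset E) (e : E) : ℕ :=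
  ((cutsIn ends c α F).filter (fun A => e ∈ cutEdges ends A)).card

lemma main_bound (ends : E → Sym2 V) (hnd : ∀ e, ¬ (ends e).IsDiag) (c : ℕ) (hc : 1 ≤ c)
    (hmin : ∀ A : Finset V, A.Nonempty → Aᶜ.Nonempty → c ≤ cutValue ends A)
    (α : ℝ) (hα : 1 ≤ α) (k : ℕ) :
    ∀ F : Finset E, numComponents ends F ≤ k →
      ((cutsIn ends c α F).card : ℝ)
        ≤ 2 * ((2:ℝ) ^ (⌈2*α⌉₊ - 1) - 1) *
          ∏ i ∈ Finset.Ioc (⌈2*α⌉₊) k, ((i:ℝ) / ((i:ℝ) - 2*α)) := by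
  induction k using Nat.strong_induction_on with
  | _ k ih =>
  intro F hF
  set r := ⌈2*α⌉₊ with hr
  have ht : (2:ℝ) ≤ 2*α := by linarith
  have htr : 2*α ≤ (r:ℝ) := Nat.le_ceil _
  have hrt : (r:ℝ) < 2*α + 1 := Nat.ceil_lt_add_one (by linarith)
  have hr2 : 2 ≤ r := by exact_mod_cast le_trans ht htr
  have hfac : ∀ i : ℕ, r < i → (0:ℝ) < (i:ℝ) - 2*α := by
    intro i hi
    have : (r:ℝ) + 1 ≤ (i:ℝ) := by exact_mod_cast hi
    linarith
  have hge1 : ∀ i : ℕ, r < i → (1:ℝ) ≤ (i:ℝ) / ((i:ℝ) - 2*α) := by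
    intro i hi
    rw [le_div_iff₀ (hfac i hi)]
    nlinarith [hα]
  have hprod1 : ∀ a b : ℕ, r ≤ a →
      (1:ℝ) ≤ ∏ i ∈ Finset.Ioc a b, ((i:ℝ) / ((i:ℝ) - 2*α)) := by
    intro a b ha
    calc (1:ℝ) = ∏ _i ∈ Finset.Ioc a b, (1:ℝ) := (Finset.prod_const_one).symm
      _ ≤ ∏ i ∈ Finset.Ioc a b, ((i:ℝ) / ((i:ℝ) - 2*α)) := by
          apply Finset.prod_le_prod
          · intro i _; norm_num
          · intro i hi
            exact hge1 i (lt_of_le_of_lt ha (Finset.mem_Ioc.1 hi).1)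
  have hP1 : ∀ m : ℕ, (1:ℝ) ≤ ∏ i ∈ Finset.Ioc r m, ((i:ℝ) / ((i:ℝ) - 2*α)) :=
    fun m => hprod1 r m le_rfl
  have hC0 : (0:ℝ) ≤ 2 * ((2:ℝ) ^ (r - 1) - 1) := by
    have : (2:ℝ) ^ 1 ≤ (2:ℝ) ^ (r-1) := pow_le_pow_right₀ (by norm_num) (by omega)
    simp at this
    linarith
  set k₀ := numComponents ends F with hk₀def
  by_cases hk₀ : k₀ ≤ r
  · -- base case
    rcases (cutsIn ends c α F).eq_empty_or_nonempty with hemp | hne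
    · rw [hemp]
      simp only [Finset.card_empty, Nat.cast_zero]
      exact mul_nonneg hC0 (le_trans zero_le_one (hP1 k))
    · have hbase := card_cutsIn_add_two_le ends c α F hne
      have h2r : (2:ℕ) ^ k₀ ≤ 2 ^ r := Nat.pow_le_pow_right (by norm_num) hk₀
      have hNr : ((cutsIn ends c α F).card : ℝ) ≤ 2 * ((2:ℝ) ^ (r-1) - 1) := by
        have hN2 : (cutsIn ends c α F).card + 2 ≤ 2 ^ r := le_trans hbase h2r
        have h1 : ((cutsIn ends c α F).card : ℝ) ≤ (2:ℝ)^r - 2 := by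
          have := (Nat.cast_le (α := ℝ)).2 hN2
          push_cast at this
          linarith
        have h2pow : (2:ℝ)^r = 2 * (2:ℝ)^(r-1) := by
          conv_lhs => rw [show r = (r-1)+1 by omega]
          rw [pow_succ]
          ring
        rw [h2pow] at h1
        linarith
      calc ((cutsIn ends c α F).card : ℝ) ≤ 2 * ((2:ℝ) ^ (r-1) - 1) := hNr
        _ ≤ _ := le_mul_of_one_le_right hC0 (hP1 k)
  · -- inductive step
    push_neg at hk₀
    have hk₀k : k₀ ≤ k := hF
    have hk₀1 : r + 1 ≤ k₀ := hk₀
    set G := survGraph ends F with hG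
    letI : Fintype G.ConnectedComponent := Fintype.ofFinite _
    have hcard : k₀ = Fintype.card G.ConnectedComponent := Nat.card_eq_fintype_card
    haveI : Nonempty G.ConnectedComponent := by
      rw [← Fintype.card_pos_iff, ← hcard]; omega
    set supp : G.ConnectedComponent → Finset V :=
      fun K => Finset.univ.filter (fun v => G.connectedComponentMk v = K) with hsupp
    have mem_supp : ∀ (v : V) (K : G.ConnectedComponent),
        v ∈ supp K ↔ G.connectedComponentMk v = K := by
      intro v K; simp [hsupp]
    have supp_ne : ∀ K : G.ConnectedComponent, (supp K).Nonempty := by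
      intro K
      obtain ⟨v, hv⟩ := K.exists_rep
      exact ⟨v, (mem_supp v K).2 hv⟩
    have supp_compl_ne : ∀ K : G.ConnectedComponent, (supp K)ᶜ.Nonempty := by
      intro K
      obtain ⟨K', hK'⟩ := Fintype.exists_ne_of_one_lt_card (by omega) K
      obtain ⟨v, hv⟩ := K'.exists_rep
      refine ⟨v, Finset.mem_compl.2 ?_⟩
      rw [mem_supp]
      intro h
      exact hK' (hv ▸ h ▸ rfl)
    -- the inter-component edges
    set Fstar : Finset E := Finset.univ.filter
      (fun e : E => ∃ a ∈ ends e, ∃ b ∈ ends e,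
        G.connectedComponentMk a ≠ G.connectedComponentMk b) with hFstar
    -- double counting: sum of component cut values = 2 * |Fstar|
    have hDC : ∑ K : G.ConnectedComponent, cutValue ends (supp K) = 2 * Fstar.card := by
      have h1 : ∀ K : G.ConnectedComponent, cutValue ends (supp K)
          = ∑ e : E, if crosses ends (supp K) e then 1 else 0 := by
        intro K
        rw [cutValue, cutEdges, Finset.card_filter]
      have h2 : Fstar.card = ∑ e : E, if (∃ a ∈ ends e, ∃ b ∈ ends e,
          G.connectedComponentMk a ≠ G.connectedComponentMk b) then 1 else 0 := by
        rw [hFstar, Finset.card_filter]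
      rw [h2, Finset.mul_sum]
      simp_rw [h1]
      rw [Finset.sum_comm]
      refine Finset.sum_congr rfl (fun e _ => ?_)
      obtain ⟨x, y, hxy⟩ := sym2_rep (ends e)
      by_cases h : G.connectedComponentMk x = G.connectedComponentMk y
      · have hnd' : ¬ (∃ a ∈ ends e, ∃ b ∈ ends e,
            G.connectedComponentMk a ≠ G.connectedComponentMk b) := by
          rintro ⟨a, ha, b, hb, hab⟩
          rw [hxy, Sym2.mem_iff] at ha hb
          rcases ha with rfl | rfl <;> rcases hb with rfl | rfl <;>
            first
              | exact hab rfl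
              | exact hab h
              | exact hab h.symm
        rw [if_neg hnd', mul_zero]
        apply Finset.sum_eq_zero
        intro K _
        rw [if_neg]
        rintro ⟨⟨a, ha, haS⟩, ⟨b, hb, hbS⟩⟩
        rw [hxy, Sym2.mem_iff] at ha hb
        rw [mem_supp] at haS
        have hbK : G.connectedComponentMk b = K := by
          rcases ha with rfl | rfl <;> rcases hb with rfl | rfl <;>
            first
              | exact haS
              | exact h ▸ haS
              | exact h.symm ▸ haS
        exact hbS ((mem_supp b K).2 hbK)
      · have hd : (∃ a ∈ ends e, ∃ b ∈ ends e,
            G.connectedComponentMk a ≠ G.connectedComponentMk b) :=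
          ⟨x, by rw [hxy]; exact Sym2.mem_mk_left x y,
           y, by rw [hxy]; exact Sym2.mem_mk_right x y, h⟩
        rw [if_pos hd, mul_one]
        have hfilter : (Finset.univ.filter (fun K => crosses ends (supp K) e))
            = {G.connectedComponentMk x, G.connectedComponentMk y} := by
          ext K
          simp only [Finset.mem_filter, Finset.mem_univ, true_and, Finset.mem_insert,
            Finset.mem_singleton]
          constructor
          · rintro ⟨⟨a, ha, haS⟩, -⟩
            rw [hxy, Sym2.mem_iff] at ha
            rw [mem_supp] at haS
            rcases ha with rfl | rfl
            · exact Or.inl haS.symm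
            · exact Or.inr haS.symm
          · rintro (rfl | rfl)
            · refine ⟨⟨x, by rw [hxy]; exact Sym2.mem_mk_left x y, (mem_supp _ _).2 rfl⟩,
                ⟨y, by rw [hxy]; exact Sym2.mem_mk_right x y, ?_⟩⟩
              rw [mem_supp]
              exact fun hh => h hh.symm
            · refine ⟨⟨y, by rw [hxy]; exact Sym2.mem_mk_right x y, (mem_supp _ _).2 rfl⟩,
                ⟨x, by rw [hxy]; exact Sym2.mem_mk_left x y, ?_⟩⟩
              rw [mem_supp]
              exact h
        rw [← Finset.card_filter, hfilter, Finset.card_pair h]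
    -- lower bound on |Fstar|
    have hLB : k₀ * c ≤ 2 * Fstar.card := by
      have h3 := Finset.card_nsmul_le_sum Finset.univ (fun K => cutValue ends (supp K)) c
        (fun K _ => hmin (supp K) (supp_ne K) (supp_compl_ne K))
      rw [Finset.card_univ, smul_eq_mul] at h3
      rw [hDC] at h3
      calc k₀ * c = Fintype.card G.ConnectedComponent * c := by rw [hcard]
        _ ≤ 2 * Fstar.card := h3
    -- Fstar is contained in F
    have hFsub : Fstar ⊆ F := by
      intro e he
      by_contra heF
      obtain ⟨-, a, ha, b, hb, hab⟩ := Finset.mem_filter.1 he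
      obtain ⟨x, y, hxy⟩ := sym2_rep (ends e)
      have hne : x ≠ y := by
        intro hh
        exact hnd e (by rw [hxy, hh]; exact Sym2.mk_isDiag_iff.2 rfl)
      have hadj : G.Adj x y := by
        rw [hG, survGraph, SimpleGraph.fromRel_adj]
        exact ⟨hne, Or.inl ⟨e, heF, hxy⟩⟩
      have hmk : G.connectedComponentMk x = G.connectedComponentMk y :=
        SimpleGraph.ConnectedComponent.sound hadj.reachable
      rw [hxy, Sym2.mem_iff] at ha hb
      rcases ha with rfl | rfl <;> rcases hb with rfl | rfl <;>
        first
          | exact hab rfl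
          | exact hab hmk
          | exact hab hmk.symm
    have hFstar_ne : Fstar.Nonempty := by
      rw [← Finset.card_pos]
      have h0 : 0 < k₀ * c := Nat.mul_pos (by omega) (by omega)
      have := lt_of_lt_of_le h0 hLB
      omega
    -- incidence counting
    set N := (cutsIn ends c α F).card with hN
    let deg : E → ℕ := fun e => degOf ends c α F e
    have hdegdef : ∀ e, deg e = ((cutsIn ends c α F).filter
      (fun A => e ∈ cutEdges ends A)).card := fun e => rfl
    have hDC2 : (∑ e ∈ Fstar, (deg e : ℝ)) ≤ (N : ℝ) * (α * c) := by
      have hswap : ∑ e ∈ Fstar, deg e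
          = ∑ A ∈ cutsIn ends c α F, (Fstar.filter (fun e => e ∈ cutEdges ends A)).card := by
        simp_rw [hdegdef, Finset.card_filter]
        rw [Finset.sum_comm]
      have hinner : ∀ A ∈ cutsIn ends c α F,
          ((Fstar.filter (fun e => e ∈ cutEdges ends A)).card : ℝ) ≤ α * c := by
        intro A hA
        have h1 : (Fstar.filter (fun e => e ∈ cutEdges ends A)) ⊆ cutEdges ends A := by
          intro e he
          exact (Finset.mem_filter.1 he).2
        have h2 : ((Fstar.filter (fun e => e ∈ cutEdges ends A)).card : ℝ)
            ≤ (cutValue ends A : ℝ) := by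
          exact_mod_cast Finset.card_le_card h1
        exact le_trans h2 (mem_cutsIn.1 hA).2.2.1
      calc (∑ e ∈ Fstar, (deg e : ℝ))
          = ∑ A ∈ cutsIn ends c α F,
              ((Fstar.filter (fun e => e ∈ cutEdges ends A)).card : ℝ) := by
            rw [← Nat.cast_sum, ← Nat.cast_sum, hswap]
        _ ≤ ∑ _A ∈ cutsIn ends c α F, (α * c) := Finset.sum_le_sum hinner
        _ = (N : ℝ) * (α * c) := by rw [Finset.sum_const, nsmul_eq_mul]
    -- pigeonhole: find a low-degree inter-component edge
    have hpig : ∃ e ∈ Fstar, (k₀ : ℝ) * (deg e) ≤ 2 * α * N := by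
      by_contra hcon
      push_neg at hcon
      have hsum : ∑ _e ∈ Fstar, (2 * α * (N:ℝ)) < ∑ e ∈ Fstar, (k₀:ℝ) * deg e :=
        Finset.sum_lt_sum_of_nonempty hFstar_ne (fun e he => hcon e he)
      rw [Finset.sum_const, ← Finset.mul_sum] at hsum
      have hc1 : ((k₀:ℝ) * c) * (α * N) ≤ (2 * Fstar.card) * (α * N) := by
        apply mul_le_mul_of_nonneg_right _
          (mul_nonneg (by linarith : (0:ℝ) ≤ α) (Nat.cast_nonneg N))
        exact_mod_cast hLB
      have hc2 : (k₀:ℝ) * (∑ e ∈ Fstar, (deg e : ℝ)) ≤ (k₀:ℝ) * ((N:ℝ) * (α * c)) := by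
        apply mul_le_mul_of_nonneg_left hDC2 (Nat.cast_nonneg k₀)
      simp only [nsmul_eq_mul] at hsum
      nlinarith [hsum, hc1, hc2]
    obtain ⟨e, heFs, hdeg⟩ := hpig
    -- split
    have hsplit : ((cutsIn ends c α F).filter (fun A => e ∈ cutEdges ends A)).card
        + ((cutsIn ends c α F).filter (fun A => ¬ (e ∈ cutEdges ends A))).card = N :=
      Finset.card_filter_add_card_filter_not _
    have hsubset : (cutsIn ends c α F).filter (fun A => ¬ (e ∈ cutEdges ends A))
        ⊆ cutsIn ends c α (F.erase e) := by
      intro A hA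
      obtain ⟨hA1, hA2⟩ := Finset.mem_filter.1 hA
      obtain ⟨h1, h2, h3, h4⟩ := mem_cutsIn.1 hA1
      exact mem_cutsIn.2 ⟨h1, h2, h3, Finset.subset_erase.2 ⟨h4, hA2⟩⟩
    -- component count decreases
    have hcompdec : numComponents ends (F.erase e) < k₀ := by
      apply numComponents_erase_lt
      obtain ⟨-, a, ha, b, hb, hab⟩ := Finset.mem_filter.1 heFs
      exact ⟨a, ha, b, hb, fun h => hab (SimpleGraph.ConnectedComponent.sound h)⟩
    -- apply the induction hypothesis
    have hIH := ih (k₀ - 1) (by omega) (F.erase e) (by omega)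
    set N' := (cutsIn ends c α (F.erase e)).card with hN'
    set C := 2 * ((2:ℝ) ^ (r - 1) - 1) with hC
    set P : ℕ → ℝ := fun m => ∏ i ∈ Finset.Ioc r m, ((i:ℝ) / ((i:ℝ) - 2*α)) with hP
    have hIH' : (N' : ℝ) ≤ C * P (k₀ - 1) := hIH
    -- arithmetic to conclude
    have hk₀R : (2*α : ℝ) < (k₀ : ℝ) := by
      have : (r:ℝ) + 1 ≤ (k₀:ℝ) := by exact_mod_cast hk₀1
      linarith
    have hk₀pos : (0:ℝ) < (k₀:ℝ) := by linarith
    have hNN' : (N : ℝ) - (deg e : ℝ) ≤ (N' : ℝ) := by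
      have hle : ((cutsIn ends c α F).filter (fun A => ¬ (e ∈ cutEdges ends A))).card ≤ N' :=
        Finset.card_le_card hsubset
      have hle' := (Nat.cast_le (α := ℝ)).2 hle
      have hsplit' := congrArg (Nat.cast (R := ℝ)) hsplit
      push_cast at hsplit' hle' ⊢
      rw [hdegdef e]
      linarith
    have hkey : (N : ℝ) * ((k₀:ℝ) - 2*α) ≤ (N' : ℝ) * (k₀:ℝ) := by
      have h1 : (k₀:ℝ) * ((N:ℝ) - (deg e:ℝ)) ≤ (k₀:ℝ) * (N':ℝ) :=
        mul_le_mul_of_nonneg_left hNN' (le_of_lt hk₀pos)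
      nlinarith [hdeg]
    have hstep : (N : ℝ) ≤ (N' : ℝ) * ((k₀:ℝ) / ((k₀:ℝ) - 2*α)) := by
      rw [← mul_div_assoc, le_div_iff₀ (by linarith)]
      linarith [hkey]
    have hPrec : P k₀ = P (k₀ - 1) * ((k₀:ℝ) / ((k₀:ℝ) - 2*α)) := by
      have hk₀eq : k₀ = (k₀ - 1) + 1 := by omega
      rw [hP]
      simp only []
      rw [hk₀eq, Finset.prod_Ioc_succ_top (by omega)]
      congr 2 <;> rw [← hk₀eq]
    have hPmono : P k₀ ≤ P k := by
      have hsplitP : P k₀ * (∏ i ∈ Finset.Ioc k₀ k, ((i:ℝ) / ((i:ℝ) - 2*α))) = P k :=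
        Finset.prod_Ioc_consecutive _ (by omega) hk₀k
      have hQ1 : (1:ℝ) ≤ ∏ i ∈ Finset.Ioc k₀ k, ((i:ℝ) / ((i:ℝ) - 2*α)) :=
        hprod1 k₀ k (by omega)
      have hPk₀0 : (0:ℝ) ≤ P k₀ := le_trans zero_le_one (hP1 k₀)
      calc P k₀ = P k₀ * 1 := (mul_one _).symm
        _ ≤ P k₀ * (∏ i ∈ Finset.Ioc k₀ k, ((i:ℝ) / ((i:ℝ) - 2*α))) :=
            mul_le_mul_of_nonneg_left hQ1 hPk₀0
        _ = P k := hsplitP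
    calc (N : ℝ) ≤ (N' : ℝ) * ((k₀:ℝ) / ((k₀:ℝ) - 2*α)) := hstep
      _ ≤ (C * P (k₀ - 1)) * ((k₀:ℝ) / ((k₀:ℝ) - 2*α)) := by
          apply mul_le_mul_of_nonneg_right hIH'
          exact div_nonneg (Nat.cast_nonneg k₀) (by linarith)
      _ = C * P k₀ := by rw [hPrec]; ring
      _ ≤ C * P k := mul_le_mul_of_nonneg_left hPmono hC0

end MainInduction

section Final

variable {V E : Type} [Fintype V] [DecidableEq V] [Fintype E]

lemma cutValue_compl (ends : E → Sym2 V) (A : Finset V) :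
    cutValue ends Aᶜ = cutValue ends A := by
  rw [cutValue, cutValue, cutEdges_compl]

lemma compl_mem_cutsIn {ends : E → Sym2 V} {c : ℕ} {α : ℝ} {F : Finset E} {A : Finset V}
    (hA : A ∈ cutsIn ends c α F) : Aᶜ ∈ cutsIn ends c α F := by
  obtain ⟨h1, h2, h3, h4⟩ := mem_cutsIn.1 hA
  refine mem_cutsIn.2 ⟨h2, ?_, ?_, ?_⟩
  · rw [compl_compl]; exact h1
  · rw [cutValue_compl]; exact h3
  · rw [cutEdges_compl]; exact h4

lemma two_mul_image_card_le (ends : E → Sym2 V) (c : ℕ) (α : ℝ) (F : Finset E) :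
    2 * ((cutsIn ends c α F).image (fun A => ({A, Aᶜ} : Finset (Finset V)))).card
      ≤ (cutsIn ends c α F).card := by
  set S := cutsIn ends c α F with hS
  set f : Finset V → Finset (Finset V) := fun A => ({A, Aᶜ} : Finset (Finset V)) with hf
  have hfibers : ∀ b ∈ S.image f, 2 ≤ (S.filter (fun A => f A = b)).card := by
    intro b hb
    obtain ⟨A, hA, hfA⟩ := Finset.mem_image.1 hb
    have hAc : Aᶜ ∈ S := compl_mem_cutsIn hA
    have hfAc : f Aᶜ = b := by
      rw [← hfA, hf]
      show ({Aᶜ, Aᶜᶜ} : Finset (Finset V)) = {A, Aᶜ}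
      rw [compl_compl]
      exact Finset.pair_comm _ _
    have hAne : A ≠ Aᶜ := by
      obtain ⟨a, ha⟩ := (mem_cutsIn.1 hA).1
      intro h
      rw [h] at ha
      exact (Finset.mem_compl.1 ha) (h ▸ ha)
    have hsub : ({A, Aᶜ} : Finset (Finset V)) ⊆ S.filter (fun X => f X = b) := by
      intro X hX
      rcases Finset.mem_insert.1 hX with rfl | hX
      · exact Finset.mem_filter.2 ⟨hA, hfA⟩
      · rw [Finset.mem_singleton.1 hX]
        exact Finset.mem_filter.2 ⟨hAc, hfAc⟩
    calc 2 = ({A, Aᶜ} : Finset (Finset V)).card := (Finset.card_pair hAne).symm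
      _ ≤ _ := Finset.card_le_card hsub
  have hsum : S.card = ∑ b ∈ S.image f, (S.filter (fun A => f A = b)).card :=
    Finset.card_eq_sum_card_image f S
  have h2 : ∑ _b ∈ S.image f, 2 ≤ ∑ b ∈ S.image f, (S.filter (fun A => f A = b)).card :=
    Finset.sum_le_sum hfibers
  rw [Finset.sum_const, smul_eq_mul] at h2
  omega

theorem stmt17' {V E : Type} [Fintype V] [DecidableEq V] [Fintype E]
    (ends : E → Sym2 V) (hnd : ∀ e, ¬ (ends e).IsDiag)
    (c : ℕ) (hc : 1 ≤ c)
    (hmin : ∀ A : Finset V, A.Nonempty → Aᶜ.Nonempty → c ≤ cutValue ends A)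
    (hex : ∃ A : Finset V, A.Nonempty ∧ Aᶜ.Nonempty ∧ cutValue ends A = c)
    (α : ℝ) (hα : 1 ≤ α)
    (F : Finset E) (k : ℕ) (hk : numComponents ends F = k) :
    (((Finset.univ.filter (fun A : Finset V =>
          A.Nonempty ∧ Aᶜ.Nonempty ∧ (cutValue ends A : ℝ) ≤ α * c ∧
            cutEdges ends A ⊆ F)).image
            (fun A => ({A, Aᶜ} : Finset (Finset V)))).card : ℝ)
      < (k : ℝ) ^ (2 * α) := by
  have hSid : Finset.univ.filter (fun A : Finset V =>
      A.Nonempty ∧ Aᶜ.Nonempty ∧ (cutValue ends A : ℝ) ≤ α * c ∧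
        cutEdges ends A ⊆ F) = cutsIn ends c α F := rfl
  rw [hSid]
  set r := ⌈2*α⌉₊ with hr
  have ht : (2:ℝ) ≤ 2*α := by linarith
  have htr : 2*α ≤ (r:ℝ) := Nat.le_ceil _
  have hrt : (r:ℝ) < 2*α + 1 := Nat.ceil_lt_add_one (by linarith)
  have hr2 : 2 ≤ r := by exact_mod_cast le_trans ht htr
  -- V is nonempty, so k ≥ 1
  obtain ⟨A₀, hA₀1, -, -⟩ := hex
  obtain ⟨v₀, -⟩ := hA₀1
  haveI : Nonempty V := ⟨v₀⟩
  have hk1 : 1 ≤ k := by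
    rw [← hk, numComponents]
    haveI : Nonempty (survGraph ends F).ConnectedComponent :=
      ⟨(survGraph ends F).connectedComponentMk v₀⟩
    exact Nat.card_pos
  have hkR0 : (0:ℝ) < (k:ℝ) := by exact_mod_cast hk1
  have hkR1 : (1:ℝ) ≤ (k:ℝ) := by exact_mod_cast hk1
  have h2img := two_mul_image_card_le ends c α F
  set Icard := ((cutsIn ends c α F).image (fun A => ({A, Aᶜ} : Finset (Finset V)))).card
    with hIcard
  have h2img' : 2 * (Icard : ℝ) ≤ ((cutsIn ends c α F).card : ℝ) := by
    exact_mod_cast h2img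
  by_cases hkr : r ≤ k
  · -- large k: use the main bound and the analytic estimate
    have hmain := main_bound ends hnd c hc hmin α hα k F (le_of_eq hk)
    have han := analytic_bound (2*α) ht k (by rw [← hr]; exact hkr)
    rw [← hr] at han
    rw [Finset.Icc_add_one_left_eq_Ioc] at han
    set P := ∏ i ∈ Finset.Ioc r k, ((i:ℝ) / ((i:ℝ) - 2*α)) with hP
    have hP1 : (1:ℝ) ≤ P := by
      rw [hP]
      calc (1:ℝ) = ∏ _i ∈ Finset.Ioc r k, (1:ℝ) := (Finset.prod_const_one).symm
        _ ≤ _ := by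
            apply Finset.prod_le_prod
            · intro i _; norm_num
            · intro i hi
              have hi1 : r < i := (Finset.mem_Ioc.1 hi).1
              have : (r:ℝ) + 1 ≤ (i:ℝ) := by exact_mod_cast hi1
              rw [le_div_iff₀ (by linarith)]
              nlinarith [hα]
    have hIle : (Icard : ℝ) ≤ ((2:ℝ)^(r-1) - 1) * P := by
      rw [← hr] at hmain
      linarith
    have hlt : ((2:ℝ)^(r-1) - 1) * P < (2:ℝ)^(r-1) * P := by
      apply mul_lt_mul_of_pos_right _ (by linarith)
      linarith
    calc (Icard : ℝ) ≤ ((2:ℝ)^(r-1) - 1) * P := hIle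
      _ < (2:ℝ)^(r-1) * P := hlt
      _ ≤ (k:ℝ) ^ (2*α) := han
  · -- small k: crude bound 2^(k-1)
    push_neg at hkr
    rcases (cutsIn ends c α F).eq_empty_or_nonempty with hemp | hne
    · have : Icard = 0 := by
        rw [hIcard, hemp]
        simp
      rw [this]
      simp only [Nat.cast_zero]
      exact Real.rpow_pos_of_pos hkR0 _
    · have hbase := card_cutsIn_add_two_le ends c α F hne
      rw [hk] at hbase
      have hIlt : (Icard : ℝ) < (2:ℝ)^(k-1) := by
        have h1 : 2 * Icard + 2 ≤ 2^k := le_trans (by omega) hbase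
        have h2 : 2 * 2^(k-1) = (2:ℕ)^k := by
          conv_rhs => rw [show k = (k-1)+1 by omega, pow_succ]
          ring
      -- 2 * Icard + 2 ≤ 2 * 2^(k-1), so Icard < 2^(k-1)
        have h3 : Icard < 2^(k-1) := by omega
        exact_mod_cast h3
      have hpow : ((2:ℝ))^(k-1) ≤ (k:ℝ) ^ (2*α) := by
        have hbound : ((2:ℝ))^(k-1) ≤ (k:ℝ)^(k-1) := by
          rcases Nat.eq_or_lt_of_le hk1 with heq | hlt
          · rw [← heq]
            norm_num
          · apply pow_le_pow_left₀ (by norm_num)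
            exact_mod_cast hlt
        have hrpow : (k:ℝ)^(k-1) = (k:ℝ) ^ (((k-1:ℕ)):ℝ) := (Real.rpow_natCast _ _).symm
        have hexp : (((k-1:ℕ)):ℝ) ≤ 2*α := by
          have hkr' : (k:ℝ) ≤ (r:ℝ) - 1 := by
            have : k + 1 ≤ r := hkr
            have := (Nat.cast_le (α := ℝ)).2 this
            push_cast at this
            linarith
          have : (((k-1:ℕ)):ℝ) = (k:ℝ) - 1 := by
            have : 1 ≤ k := hk1
            push_cast [this]
            ring
          rw [this]
          linarith
        calc ((2:ℝ))^(k-1) ≤ (k:ℝ)^(k-1) := hbound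
          _ = (k:ℝ) ^ (((k-1:ℕ)):ℝ) := hrpow
          _ ≤ (k:ℝ) ^ (2*α) := Real.rpow_le_rpow_of_exponent_le hkR1 hexp
      linarith

end Final

/-- Let `G = (V, E)` be a multigraph with minimum cut value `c ≥ 1`, let
`α ≥ 1` be real, and let `F ⊆ E` be a set of edges such that `(V, E ∖ F)` has exactly `k`
connected components.  Then the number of distinct `α`-minimum cuts of `G` whose edge sets are
contained in `F` is less than `k ^ (2α)`. -/
theorem stmt17 {V E : Type} [Fintype V] [DecidableEq V] [Fintype E]
    (ends : E → Sym2 V) (hnd : ∀ e, ¬ (ends e).IsDiag)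
    (c : ℕ) (hc : 1 ≤ c)
    (hmin : ∀ A : Finset V, A.Nonempty → Aᶜ.Nonempty → c ≤ cutValue ends A)
    (hex : ∃ A : Finset V, A.Nonempty ∧ Aᶜ.Nonempty ∧ cutValue ends A = c)
    (α : ℝ) (hα : 1 ≤ α)
    (F : Finset E) (k : ℕ) (hk : numComponents ends F = k) :
    (((Finset.univ.filter (fun A : Finset V =>
          A.Nonempty ∧ Aᶜ.Nonempty ∧ (cutValue ends A : ℝ) ≤ α * c ∧
            cutEdges ends A ⊆ F)).image
            (fun A => ({A, Aᶜ} : Finset (Finset V)))).card : ℝ)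
      < (k : ℝ) ^ (2 * α) :=
  stmt17' ends hnd c hc hmin hex α hα F k hk
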